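/- arXiv:2103.07729 — 2 statements merged into one kernel-verified Lean document; each statement's English description precedes it below -/
import Mathlib

section
/- If f(z) = ∑_{m=0}^∞ a_m z^m is analytic on the open unit disc with |f(z)| < 1 for all |z| < 1, then ∑_{m=0}^∞ |a_m| r^m ≤ 1 for all 0 ≤ r ≤ 1/3. -/
open scoped Topology
open Metric Set


-- Möbius disc automorphism bound
lemma mobius_lt_one (w v : ℂ) (hw : ‖w‖ < 1) (hv : ‖v‖ < 1) :
    ‖(v - w) / (1 - (starRingEnd ℂ) w * v)‖ < 1 := by
  have hw2 : w.re ^ 2 + w.im ^ 2 < 1 := by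
    have := Complex.sq_norm w
    have h1 : ‖w‖ < 1 := hw
    nlinarith [Complex.normSq_apply w, norm_nonneg w]
  have hv2 : v.re ^ 2 + v.im ^ 2 < 1 := by
    have := Complex.sq_norm v
    have h1 : ‖v‖ < 1 := hv
    nlinarith [Complex.normSq_apply v, norm_nonneg v]
  have key : Complex.normSq (v - w) < Complex.normSq (1 - (starRingEnd ℂ) w * v) := by
    simp only [Complex.normSq_apply, Complex.sub_re, Complex.sub_im, Complex.mul_re,
      Complex.mul_im, Complex.one_re, Complex.one_im, Complex.conj_re, Complex.conj_im]
    nlinarith [sq_nonneg (1 - (w.re^2 + w.im^2)), sq_nonneg (1 - (v.re^2+v.im^2))]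
  have hd : (1 : ℂ) - (starRingEnd ℂ) w * v ≠ 0 := by
    intro h
    rw [h] at key
    exact (Complex.normSq_nonneg _).not_gt (by simpa using key)
  rw [norm_div, div_lt_one (norm_pos_iff.mpr hd)]
  have h1 : ‖v - w‖ ^ 2 < ‖1 - (starRingEnd ℂ) w * v‖ ^ 2 := by
    rwa [← Complex.sq_norm, ← Complex.sq_norm] at key
  nlinarith [norm_nonneg (v - w), norm_nonneg (1 - (starRingEnd ℂ) w * v)]

-- denominator nonzero
lemma mobius_denom_ne (w v : ℂ) (hw : ‖w‖ < 1) (hv : ‖v‖ < 1) :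
    (1 : ℂ) - (starRingEnd ℂ) w * v ≠ 0 := by
  intro h
  have : ‖(starRingEnd ℂ) w * v‖ < 1 := by
    rw [norm_mul, RCLike.norm_conj]
    calc ‖w‖ * ‖v‖ ≤ 1 * ‖v‖ := by gcongr
    _ < 1 := by simpa using hv
  rw [sub_eq_zero] at h
  rw [← h] at this
  simp at this

lemma schwarz_pick_zero (F : ℂ → ℂ) (hd : DifferentiableOn ℂ F (ball (0:ℂ) 1))
    (hb : ∀ z ∈ ball (0:ℂ) 1, ‖F z‖ < 1) :
    ‖deriv F 0‖ ≤ 1 - ‖F 0‖ ^ 2 := by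
  have h01 : (0:ℂ) ∈ ball (0:ℂ) 1 := by simp
  set w := F 0 with hwdef
  have hw : ‖w‖ < 1 := hb 0 h01
  set c := (starRingEnd ℂ) w with hcdef
  set h : ℂ → ℂ := fun z => (F z - w) / (1 - c * F z) with hhdef
  have hFz : ∀ z ∈ ball (0:ℂ) 1, (1:ℂ) - c * F z ≠ 0 := fun z hz =>
    mobius_denom_ne w (F z) hw (hb z hz)
  have hd' : DifferentiableOn ℂ h (ball (0:ℂ) 1) := by
    apply DifferentiableOn.div
    · exact hd.sub (differentiableOn_const w)
    · exact (differentiableOn_const (1:ℂ)).sub ((differentiableOn_const c).mul hd)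
    · exact hFz
  have hh0 : h 0 = 0 := by simp [hhdef, hwdef]
  have hmaps : MapsTo h (ball (0:ℂ) 1) (ball (h 0) 1) := by
    intro z hz
    rw [hh0, mem_ball, dist_zero_right]
    exact mobius_lt_one w (F z) hw (hb z hz)
  have hS : ‖deriv h 0‖ ≤ 1 / 1 :=
    Complex.norm_deriv_le_div_of_mapsTo_ball hd' (hmaps.mono_right ball_subset_closedBall) one_pos
  -- compute deriv h 0
  have hF0 : DifferentiableAt ℂ F 0 := hd.differentiableAt (ball_mem_nhds _ one_pos)
  have hFd : HasDerivAt F (deriv F 0) 0 := hF0.hasDerivAt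
  have hnum : HasDerivAt (fun z => F z - w) (deriv F 0) 0 := hFd.sub_const w
  have hden : HasDerivAt (fun z => (1:ℂ) - c * F z) (-(c * deriv F 0)) 0 := by
    simpa using (hFd.const_mul c).const_sub 1
  have hden0 : (1:ℂ) - c * F 0 ≠ 0 := hFz 0 h01
  have hdh : HasDerivAt h
      ((deriv F 0 * (1 - c * F 0) - (F 0 - w) * (-(c * deriv F 0))) / (1 - c * F 0) ^ 2) 0 :=
    hnum.div hden hden0
  have hval : deriv h 0 = deriv F 0 / (1 - c * w) := by
    have hden0' : (1:ℂ) - c * w ≠ 0 := hden0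
    rw [hdh.deriv, ← hwdef, sub_self, zero_mul, sub_zero, pow_two, ← div_div,
      mul_div_cancel_right₀ _ hden0']
  rw [hval] at hS
  have hcw : (1:ℂ) - c * w = ((1 - ‖w‖^2 : ℝ) : ℂ) := by
    rw [hcdef, mul_comm, Complex.mul_conj]
    push_cast
    rw [Complex.normSq_eq_norm_sq]
    norm_num
  have hpos : (0:ℝ) < 1 - ‖w‖^2 := by nlinarith [norm_nonneg w]
  rw [hcw, norm_div, Complex.norm_real, Real.norm_of_nonneg hpos.le] at hS
  rw [div_le_div_iff₀ hpos one_pos] at hS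
  simpa using hS

lemma ofScalars_coeff' (c : ℕ → ℂ) (n : ℕ) :
    (FormalMultilinearSeries.ofScalars ℂ c).coeff n = c n := by
  simp [FormalMultilinearSeries.coeff, FormalMultilinearSeries.ofScalars, Pi.one_def,
    List.ofFn_const, List.prod_replicate]

lemma hasFPS (c : ℕ → ℂ) (g : ℂ → ℂ)
    (h : ∀ z : ℂ, ‖z‖ < 1 → HasSum (fun m : ℕ => c m * z ^ m) (g z)) :
    HasFPowerSeriesOnBall g (FormalMultilinearSeries.ofScalars ℂ c) 0 1 := by
  refine ⟨?_, one_pos, ?_⟩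
  · apply ENNReal.le_of_forall_nnreal_lt
    intro r hr
    apply FormalMultilinearSeries.le_radius_of_summable
    have hr1 : ‖(((r:ℝ)) : ℂ)‖ < 1 := by
      have : (r:ℝ) < 1 := by exact_mod_cast hr
      simpa [Complex.norm_real, abs_of_nonneg r.2] using this
    have hs : Summable fun m : ℕ => ‖c m * ((r:ℝ):ℂ) ^ m‖ :=
      summable_norm_iff.mpr (h _ hr1).summable
    apply Summable.congr hs
    intro n
    rw [norm_mul, norm_pow, FormalMultilinearSeries.ofScalars_norm]
    congr 2
    simp [Complex.norm_real, abs_of_nonneg r.2]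
  · intro y hy
    rw [mem_emetric_ball_zero_iff] at hy
    have hy1 : ‖y‖ < 1 := by rw [enorm_eq_nnnorm] at hy; exact_mod_cast hy
    have hh := h y hy1
    rw [zero_add]
    apply HasSum.congr_fun hh  -- maybe wrong name/direction
    intro n
    rw [FormalMultilinearSeries.apply_eq_pow_smul_coeff, ofScalars_coeff', smul_eq_mul, mul_comm]

lemma coeff_bound (a : ℕ → ℂ) (f : ℂ → ℂ)
    (hsum : ∀ z : ℂ, ‖z‖ < 1 → HasSum (fun m : ℕ => a m * z ^ m) (f z))
    (hbound : ∀ z : ℂ, ‖z‖ < 1 → ‖f z‖ < 1) (m : ℕ) (hm : 1 ≤ m) :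
    ‖a m‖ ≤ 1 - ‖a 0‖ ^ 2 := by
  have hm0 : m ≠ 0 := Nat.one_le_iff_ne_zero.mp hm
  have hmc : (m:ℂ) ≠ 0 := Nat.cast_ne_zero.mpr hm0
  set ω : ℂ := Complex.exp (2 * Real.pi * Complex.I / m) with hω
  have hprim : IsPrimitiveRoot ω m := Complex.isPrimitiveRoot_exp m hm0
  have hωm : ω ^ m = 1 := hprim.pow_eq_one
  have hω1 : ‖ω‖ = 1 := by
    have h : ‖ω ^ m‖ = ‖(1:ℂ)‖ := by rw [hωm]
    rw [norm_pow, norm_one] at h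
    have h0 : (0:ℝ) ≤ ‖ω‖ := norm_nonneg ω
    rcases (pow_eq_one_iff_cases.mp h) with h' | h' | h'
    · omega
    · exact h'
    · exact absurd h'.1 (by nlinarith)
  -- key pointwise statement
  have key : ∀ w : ℂ, ‖w‖ < 1 → ∃ S : ℂ, HasSum (fun k => a (k * m) * w ^ k) S ∧ ‖S‖ < 1 := by
    intro w hw
    -- m-th root
    obtain ⟨z, hz1, hzm⟩ : ∃ z : ℂ, ‖z‖ < 1 ∧ z ^ m = w := by
      rcases eq_or_ne w 0 with rfl | hw0
      · exact ⟨0, by norm_num, zero_pow hm0⟩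
      · refine ⟨Complex.exp (Complex.log w / m), ?_, ?_⟩
        · rw [Complex.norm_exp]
          have hre : (Complex.log w / m).re = Real.log ‖w‖ / m := by
            have hcast : ((m:ℂ)) = ((m:ℝ):ℂ) := by push_cast; rfl
            rw [hcast, Complex.div_ofReal_re, Complex.log_re]
          rw [hre]
          have hlt : Real.log ‖w‖ < 0 :=
            Real.log_neg (norm_pos_iff.mpr hw0) hw
          calc Real.exp (Real.log ‖w‖ / m) < Real.exp 0 := by
                apply Real.exp_lt_exp.mpr
                apply div_neg_of_neg_of_pos hlt
                exact_mod_cast Nat.pos_of_ne_zero hm0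
          _ = 1 := Real.exp_zero
        · rw [← Complex.exp_nat_mul, mul_div_cancel₀ _ hmc, Complex.exp_log hw0]
    -- averaged sums
    have hrot : ∀ j : ℕ, ‖ω ^ j * z‖ < 1 := by
      intro j
      rw [norm_mul, norm_pow, hω1, one_pow, one_mul]
      exact hz1
    have havg : HasSum
        (fun n => ∑ j ∈ Finset.range m, (m:ℂ)⁻¹ * (a n * (ω ^ j * z) ^ n))
        (∑ j ∈ Finset.range m, (m:ℂ)⁻¹ * f (ω ^ j * z)) :=
      hasSum_sum fun j _ => (hsum _ (hrot j)).mul_left _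
    set S := ∑ j ∈ Finset.range m, (m:ℂ)⁻¹ * f (ω ^ j * z) with hSdef
    -- termwise evaluation
    have hterm : ∀ n : ℕ, (∑ j ∈ Finset.range m, (m:ℂ)⁻¹ * (a n * (ω ^ j * z) ^ n))
        = if m ∣ n then a n * z ^ n else 0 := by
      intro n
      have hpow : ∀ j : ℕ, (ω ^ j * z) ^ n = (ω ^ n) ^ j * z ^ n := by
        intro j
        rw [mul_pow, ← pow_mul, ← pow_mul, mul_comm j n]
      simp only [hpow]
      have hre : ∀ x : ℕ, (m:ℂ)⁻¹ * (a n * ((ω ^ n) ^ x * z ^ n))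
          = ((m:ℂ)⁻¹ * a n * z ^ n) * (ω ^ n) ^ x := fun x => by ring
      simp only [hre]
      rw [← Finset.mul_sum]
      by_cases hd : m ∣ n
      · have hone : ω ^ n = 1 := (hprim.pow_eq_one_iff_dvd n).mpr hd
        rw [hone, if_pos hd]
        simp only [one_pow, Finset.sum_const, Finset.card_range, nsmul_eq_mul, mul_one]
        field_simp
      · have hne : ω ^ n ≠ 1 := fun h => hd ((hprim.pow_eq_one_iff_dvd n).mp h)
        rw [if_neg hd, geom_sum_eq hne]
        have : (ω ^ n) ^ m = 1 := by rw [← pow_mul, mul_comm, pow_mul, hωm, one_pow]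
        rw [this]
        simp
    -- reindex to multiples of m
    have hif : HasSum (fun n => if m ∣ n then a n * z ^ n else 0) S := by
      exact HasSum.congr_fun havg fun n => (hterm n).symm
    have hinj : Function.Injective (fun k : ℕ => k * m) := fun x y h => by
      exact Nat.eq_of_mul_eq_mul_right (Nat.pos_of_ne_zero hm0) h
    have hoff : ∀ n ∉ Set.range (fun k : ℕ => k * m),
        (if m ∣ n then a n * z ^ n else 0) = 0 := by
      intro n hn
      rw [if_neg]
      rintro ⟨k, rfl⟩
      exact hn ⟨k, mul_comm k m⟩
    have hS : HasSum (fun k => a (k * m) * w ^ k) S := by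
      have h2 := (Function.Injective.hasSum_iff hinj hoff).mpr hif
      apply HasSum.congr_fun h2
      intro k
      simp only [Function.comp]
      rw [if_pos (dvd_mul_left m k), ← hzm, ← pow_mul, mul_comm m k]
    refine ⟨S, hS, ?_⟩
    -- norm of S < 1
    calc ‖S‖ ≤ ∑ j ∈ Finset.range m, ‖(m:ℂ)⁻¹ * f (ω ^ j * z)‖ := norm_sum_le _ _
    _ = (m:ℝ)⁻¹ * ∑ j ∈ Finset.range m, ‖f (ω ^ j * z)‖ := by
        rw [Finset.mul_sum]
        apply Finset.sum_congr rfl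
        intro j _
        rw [norm_mul, norm_inv]
        norm_num
    _ < (m:ℝ)⁻¹ * m := by
        have hmpos : (0:ℝ) < m := by exact_mod_cast Nat.pos_of_ne_zero hm0
        apply mul_lt_mul_of_pos_left _ (by positivity)
        calc ∑ j ∈ Finset.range m, ‖f (ω ^ j * z)‖
            < ∑ j ∈ Finset.range m, 1 :=
              Finset.sum_lt_sum_of_nonempty (Finset.nonempty_range_iff.mpr hm0)
                (fun j _ => hbound _ (hrot j))
        _ = m := by simp
    _ = 1 := by
        field_simp
  -- define G as the sum of the subseries
  set G : ℂ → ℂ := fun w => ∑' k, a (k * m) * w ^ k with hGdef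
  have hG : ∀ w : ℂ, ‖w‖ < 1 → HasSum (fun k => a (k * m) * w ^ k) (G w) ∧ ‖G w‖ < 1 := by
    intro w hw
    obtain ⟨S, hS, hS1⟩ := key w hw
    have hGS : G w = S := hS.tsum_eq
    exact ⟨hGS ▸ hS, hGS ▸ hS1⟩
  have hFP : HasFPowerSeriesOnBall G (FormalMultilinearSeries.ofScalars ℂ (fun k => a (k * m))) 0 1 :=
    hasFPS _ _ fun w hw => (hG w hw).1
  have hdiff : DifferentiableOn ℂ G (ball (0:ℂ) 1) := by
    intro z hz
    rw [mem_ball, dist_zero_right] at hz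
    have hmem : z ∈ Metric.eball (0:ℂ) 1 := by
      rw [mem_emetric_ball_zero_iff, enorm_eq_nnnorm]
      exact_mod_cast hz
    exact (hFP.analyticAt_of_mem hmem).differentiableAt.differentiableWithinAt
  have hb' : ∀ z ∈ ball (0:ℂ) 1, ‖G z‖ < 1 := by
    intro z hz
    rw [mem_ball, dist_zero_right] at hz
    exact (hG z hz).2
  have hSP := schwarz_pick_zero G hdiff hb'
  have hG0 : G 0 = a 0 := by
    have h1 := (hG 0 (by norm_num)).1
    have h2 : HasSum (fun k => a (k * m) * (0:ℂ) ^ k) (a (0 * m) * (0:ℂ) ^ 0) :=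
      hasSum_single 0 (fun k hk => by simp [zero_pow hk])
    have := h1.unique h2
    simpa using this
  have hderiv : deriv G 0 = a m := by
    rw [hFP.hasFPowerSeriesAt.deriv]
    have : (FormalMultilinearSeries.ofScalars ℂ (fun k => a (k * m))) 1 (fun _ => (1:ℂ))
        = (FormalMultilinearSeries.ofScalars ℂ (fun k => a (k * m))).coeff 1 := rfl
    rw [this, ofScalars_coeff', one_mul]
  rw [← hderiv, ← hG0]
  exact hSP

/-- Classical Bohr inequality: if `f(z) = ∑ aₘ zᵐ` on the unit disc and `|f(z)| < 1`
there, then `∑ |aₘ| rᵐ ≤ 1` for `0 ≤ r ≤ 1/3`. -/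
theorem bohr_inequality (a : ℕ → ℂ) (f : ℂ → ℂ)
    (hsum : ∀ z : ℂ, ‖z‖ < 1 → HasSum (fun m : ℕ => a m * z ^ m) (f z))
    (hbound : ∀ z : ℂ, ‖z‖ < 1 → ‖f z‖ < 1) :
    ∀ r : ℝ, 0 ≤ r → r ≤ 1 / 3 → ∑' m : ℕ, ‖a m‖ * r ^ m ≤ 1 := by
  intro r hr0 hr13
  set x := ‖a 0‖ with hx
  have hx0 : f 0 = a 0 := by
    have h1 := hsum 0 (by norm_num)
    have h2 : HasSum (fun m => a m * (0:ℂ) ^ m) (a 0 * (0:ℂ) ^ 0) :=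
      hasSum_single 0 (fun k hk => by simp [zero_pow hk])
    simpa using h1.unique h2
  have hx1 : x < 1 := by rw [hx, ← hx0]; exact hbound 0 (by norm_num)
  have hxnn : 0 ≤ x := norm_nonneg _
  have hcb : ∀ m : ℕ, 1 ≤ m → ‖a m‖ ≤ 1 - x ^ 2 := fun m hm =>
    coeff_bound a f hsum hbound m hm
  have hr1 : r < 1 := lt_of_le_of_lt hr13 (by norm_num)
  have hanorm : ∀ m : ℕ, ‖a m‖ ≤ 1 := by
    intro m
    rcases Nat.eq_zero_or_pos m with rfl | hm
    · exact hx1.le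
    · exact (hcb m hm).trans (by nlinarith)
  have hsummable : Summable (fun m : ℕ => ‖a m‖ * r ^ m) := by
    apply Summable.of_nonneg_of_le (fun m => by positivity)
      (fun m => ?_) (summable_geometric_of_lt_one hr0 hr1)
    calc ‖a m‖ * r ^ m ≤ 1 * r ^ m := by
          apply mul_le_mul_of_nonneg_right (hanorm m) (by positivity)
    _ = r ^ m := one_mul _
  have hsum2 : Summable (fun m : ℕ => ‖a (m+1)‖ * r ^ (m+1)) := by
    exact_mod_cast (summable_nat_add_iff 1).mpr hsummable
  have hgeom : Summable (fun m : ℕ => (1 - x ^ 2) * (r ^ (m+1))) := by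
    apply Summable.mul_left
    exact_mod_cast (summable_nat_add_iff 1).mpr (summable_geometric_of_lt_one hr0 hr1)
  rw [Summable.tsum_eq_zero_add hsummable]
  have htail : ∑' m : ℕ, ‖a (m+1)‖ * r ^ (m+1) ≤ (1 - x^2) * (r / (1 - r)) := by
    have h1 : ∑' m : ℕ, ‖a (m+1)‖ * r ^ (m+1) ≤ ∑' m : ℕ, (1 - x^2) * r ^ (m+1) := by
      apply Summable.tsum_le_tsum _ hsum2 hgeom
      intro m
      apply mul_le_mul_of_nonneg_right (hcb (m+1) (by omega)) (by positivity)
    have h2 : ∑' m : ℕ, (1 - x^2) * r ^ (m+1) = (1 - x^2) * (r / (1-r)) := by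
      rw [tsum_mul_left]
      congr 1
      have : ∀ m : ℕ, r ^ (m+1) = r * r ^ m := fun m => by ring
      simp_rw [this]
      rw [tsum_mul_left, tsum_geometric_of_lt_one hr0 hr1, div_eq_mul_inv]
    rw [h2] at h1
    exact h1
  have hhead : ‖a 0‖ * r ^ 0 = x := by simp [hx]
  rw [hhead]
  have hrfrac : r / (1 - r) ≤ 1 / 2 := by
    rw [div_le_div_iff₀ (by linarith) (by norm_num)]
    linarith
  have : ∑' m : ℕ, ‖a (m+1)‖ * r ^ (m+1) ≤ (1 - x^2) * (1/2) := by
    refine htail.trans ?_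
    apply mul_le_mul_of_nonneg_left hrfrac (by nlinarith)
  nlinarith
end

section
/- Let (a_m), (b_m) be complex sequences with a_1 = 1, |a_m| ≤ m for all m ≥ 1, and |a_m + λ b_m| ≤ 1 for all m ≥ 1 with some λ ∈ ℂ of modulus 1. Then ∑_{m=1}^∞ |a_m| r^m + ∑_{m=1}^∞ |b_m| r^m ≤ 2r/(1-r)^2 + r/(1-r), and this is ≤ 1 for 0 ≤ r ≤ (5-√17)/4. -/
lemma hasSum_aux (r : ℝ) (hr0 : 0 ≤ r) (hr1 : r < 1) :
    HasSum (fun m : ℕ => ((m : ℝ) + 1) * r ^ (m + 1)) (r / (1 - r) ^ 2) := by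
  have hr : ‖r‖ < 1 := by rwa [Real.norm_eq_abs, abs_of_nonneg hr0]
  have h := hasSum_coe_mul_geometric_of_norm_lt_one (r := r) hr
  have h2 := (hasSum_nat_add_iff' (f := fun n : ℕ => (n : ℝ) * r ^ n) 1).2 h
  simp only [Finset.range_one, Finset.sum_singleton, Nat.cast_zero, pow_zero,
    zero_mul, sub_zero] at h2
  convert h2 using 2 with m
  case e'_3 => rfl
  push_cast
  ring

lemma hasSum_geom_aux (r : ℝ) (hr0 : 0 ≤ r) (hr1 : r < 1) :
    HasSum (fun m : ℕ => r ^ (m + 1)) (r / (1 - r)) := by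
  have h := hasSum_geometric_of_lt_one hr0 hr1
  have h2 := (hasSum_nat_add_iff' (f := fun n : ℕ => r ^ n) 1).2 h
  simp only [Finset.range_one, Finset.sum_singleton, pow_zero] at h2
  convert h2 using 1
  case e'_3 => rfl
  have h1 : (1 : ℝ) - r > 0 := by linarith
  field_simp
  ring

/-- Bohr-type estimate for functions with `h + e^{iθ} g` convex:
from `a₁ = 1`, `|aₘ| ≤ m` and `|aₘ + λ bₘ| ≤ 1` (with `|λ| = 1`) follows the series bound. -/
theorem bohr_sum_bound_convex_direction (a b : ℕ → ℂ) (lam : ℂ)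
    (hlam : ‖lam‖ = 1) (ha1 : a 1 = 1)
    (ha : ∀ m : ℕ, 1 ≤ m → ‖a m‖ ≤ (m : ℝ))
    (hab : ∀ m : ℕ, 1 ≤ m → ‖a m + lam * b m‖ ≤ 1) :
    ∀ r : ℝ, r ∈ Set.Ico (0 : ℝ) 1 →
      (∑' m : ℕ, ‖a (m + 1)‖ * r ^ (m + 1) + ∑' m : ℕ, ‖b (m + 1)‖ * r ^ (m + 1) ≤
          2 * r / (1 - r) ^ 2 + r / (1 - r)) ∧
      (r ≤ (5 - Real.sqrt 17) / 4 →
        ∑' m : ℕ, ‖a (m + 1)‖ * r ^ (m + 1) + ∑' m : ℕ, ‖b (m + 1)‖ * r ^ (m + 1) ≤ 1) := by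
  intro r ⟨hr0, hr1⟩
  have hb : ∀ m : ℕ, 1 ≤ m → ‖b m‖ ≤ (m : ℝ) + 1 := by
    intro m hm
    have : ‖lam * b m‖ = ‖b m‖ := by rw [norm_mul, hlam, one_mul]
    calc ‖b m‖ = ‖(a m + lam * b m) - a m‖ := by rw [← this]; ring_nf
      _ ≤ ‖a m + lam * b m‖ + ‖a m‖ := norm_sub_le _ _
      _ ≤ 1 + m := add_le_add (hab m hm) (ha m hm)
      _ = (m : ℝ) + 1 := by ring
  have hrpow : ∀ m : ℕ, (0:ℝ) ≤ r ^ (m+1) := fun m => pow_nonneg hr0 _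
  have hSa := hasSum_aux r hr0 hr1
  have hSg := hasSum_geom_aux r hr0 hr1
  have hSb : HasSum (fun m : ℕ => ((m : ℝ) + 2) * r ^ (m + 1))
      (r / (1 - r) ^ 2 + r / (1 - r)) := by
    have := hSa.add hSg
    convert this using 2 with m
    ring
  -- termwise bounds
  have hba : ∀ m : ℕ, ‖a (m+1)‖ * r ^ (m+1) ≤ ((m : ℝ) + 1) * r ^ (m+1) := by
    intro m
    apply mul_le_mul_of_nonneg_right _ (hrpow m)
    have := ha (m+1) (Nat.le_add_left 1 m)
    push_cast at this ⊢; linarith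
  have hbb : ∀ m : ℕ, ‖b (m+1)‖ * r ^ (m+1) ≤ ((m : ℝ) + 2) * r ^ (m+1) := by
    intro m
    apply mul_le_mul_of_nonneg_right _ (hrpow m)
    have := hb (m+1) (Nat.le_add_left 1 m)
    push_cast at this ⊢; linarith
  have hsuma : Summable (fun m : ℕ => ‖a (m+1)‖ * r ^ (m+1)) :=
    Summable.of_nonneg_of_le (fun m => mul_nonneg (norm_nonneg _) (hrpow m)) hba hSa.summable
  have hsumb : Summable (fun m : ℕ => ‖b (m+1)‖ * r ^ (m+1)) :=
    Summable.of_nonneg_of_le (fun m => mul_nonneg (norm_nonneg _) (hrpow m)) hbb hSb.summable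
  have hta : ∑' m : ℕ, ‖a (m+1)‖ * r ^ (m+1) ≤ r / (1 - r) ^ 2 := by
    have := Summable.tsum_le_tsum hba hsuma hSa.summable
    rwa [hSa.tsum_eq] at this
  have htb : ∑' m : ℕ, ‖b (m+1)‖ * r ^ (m+1) ≤ r / (1 - r) ^ 2 + r / (1 - r) := by
    have := Summable.tsum_le_tsum hbb hsumb hSb.summable
    rwa [hSb.tsum_eq] at this
  have hmain : ∑' m : ℕ, ‖a (m + 1)‖ * r ^ (m + 1) + ∑' m : ℕ, ‖b (m + 1)‖ * r ^ (m + 1) ≤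
      2 * r / (1 - r) ^ 2 + r / (1 - r) := by
    have : 2 * r / (1 - r) ^ 2 = r / (1 - r) ^ 2 + r / (1 - r) ^ 2 := by ring
    rw [this]; linarith
  refine ⟨hmain, fun hr17 => ?_⟩
  refine hmain.trans ?_
  have h1r : (0:ℝ) < 1 - r := by linarith
  have hs : Real.sqrt 17 ^ 2 = 17 := Real.sq_sqrt (by norm_num)
  have hs0 : (0:ℝ) ≤ Real.sqrt 17 := Real.sqrt_nonneg _
  rw [div_add_div _ _ (by positivity) (ne_of_gt h1r), div_le_one (by positivity)]
  have h2 : 0 ≤ 5 - Real.sqrt 17 - 4 * r := by linarith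
  have h3 : 0 ≤ 5 + Real.sqrt 17 - 4 * r := by linarith
  nlinarith [mul_nonneg (mul_nonneg h2 h3) h1r.le, hs]
end
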